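/- Let φ: ℝ → ℝ≥0 be even and differentiable and c(t,s) := t²s. If the function Φ given by Φ(t) = -φ(√t) for t ≥ 0 and Φ(t) = +∞ for t < 0 is convex (and lower semicontinuous), then φ^{cc} = φ. -/

import Mathlib

open Filter

private lemma ereal_le_coe_of_forall_eps {x : EReal} {c : ℝ}
    (h : ∀ ε : ℝ, 0 < ε → x ≤ ((c + ε : ℝ) : EReal)) : x ≤ (c : EReal) := by
  induction x using EReal.rec with
  | bot => exact bot_le
  | coe r =>
    rw [EReal.coe_le_coe_iff]
    refine le_of_forall_pos_le_add fun ε hε => ?_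
    exact EReal.coe_le_coe_iff.mp (h ε hε)
  | top =>
    exact absurd (top_le_iff.mp (h 1 one_pos)) (EReal.coe_ne_top _)

private lemma sqrt_hasDerivAt (φ : ℝ → ℝ) (hdiff : Differentiable ℝ φ) {u : ℝ} (hu : 0 < u) :
    HasDerivAt (fun v => φ (Real.sqrt v)) (deriv φ (Real.sqrt u) * (1 / (2 * Real.sqrt u))) u :=
  (hdiff (Real.sqrt u)).hasDerivAt.comp u (Real.hasDerivAt_sqrt hu.ne')

/-- tangent line inequality for the concave function `u ↦ φ (√u)`. -/
private lemma tangent (φ : ℝ → ℝ)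
    (hconc : ConcaveOn ℝ (Set.Ici 0) (fun t => φ (Real.sqrt t)))
    {u₀ m : ℝ} (hu₀ : 0 ≤ u₀)
    (hm : HasDerivAt (fun v => φ (Real.sqrt v)) m u₀) :
    ∀ u, 0 ≤ u → φ (Real.sqrt u) ≤ φ (Real.sqrt u₀) + m * (u - u₀) := by
  intro u hu
  rcases lt_trichotomy u u₀ with h | h | h
  · have hs := hconc.le_slope_of_hasDerivAt (Set.mem_Ici.2 hu) (Set.mem_Ici.2 hu₀) h hm
    rw [slope_def_field] at hs
    have hpos : 0 < u₀ - u := by linarith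
    rw [le_div_iff₀ hpos] at hs
    nlinarith
  · simp [h]
  · have hs := hconc.slope_le_of_hasDerivAt (Set.mem_Ici.2 hu₀) (Set.mem_Ici.2 hu) h hm
    rw [slope_def_field] at hs
    have hpos : 0 < u - u₀ := by linarith
    rw [div_le_iff₀ hpos] at hs
    nlinarith

/-- the derivative of the concave nonnegative function is nonnegative. -/
private lemma deriv_nonneg (φ : ℝ → ℝ) (hnn : ∀ t, 0 ≤ φ t)
    (hconc : ConcaveOn ℝ (Set.Ici 0) (fun t => φ (Real.sqrt t)))
    {u₀ m : ℝ} (hu₀ : 0 ≤ u₀)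
    (hm : HasDerivAt (fun v => φ (Real.sqrt v)) m u₀) : 0 ≤ m := by
  by_contra hneg
  push_neg at hneg
  set u : ℝ := u₀ + (φ (Real.sqrt u₀) + 1) / (-m) with hudef
  have hq : 0 < (φ (Real.sqrt u₀) + 1) / (-m) :=
    div_pos (by linarith [hnn (Real.sqrt u₀)]) (by linarith)
  have hu : 0 ≤ u := by positivity
  have ht := tangent φ hconc hu₀ hm u hu
  have hmne : m ≠ 0 := hneg.ne
  have : m * (u - u₀) = -(φ (Real.sqrt u₀) + 1) := by
    rw [hudef, add_sub_cancel_left, div_neg, mul_neg, mul_div_assoc',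
      mul_div_cancel_left₀ _ hmne]
  rw [this] at ht
  linarith [hnn (Real.sqrt u)]

private lemma phi_sq (φ : ℝ → ℝ) (heven : ∀ t, φ (-t) = φ t) (t : ℝ) :
    φ (Real.sqrt (t ^ 2)) = φ t := by
  rw [Real.sqrt_sq_eq_abs]
  rcases abs_choice t with h | h
  · rw [h]
  · rw [h, heven]

/-- value of the c-transform at the tangent slope. -/
private lemma psi_val (φ : ℝ → ℝ) (heven : ∀ t, φ (-t) = φ t)
    (hconc : ConcaveOn ℝ (Set.Ici 0) (fun t => φ (Real.sqrt t)))
    {u₀ m : ℝ} (hu₀ : 0 ≤ u₀)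
    (hm : HasDerivAt (fun v => φ (Real.sqrt v)) m u₀) :
    (⨅ t' : ℝ, ((t' ^ 2 * m - φ t' : ℝ) : EReal))
      = ((u₀ * m - φ (Real.sqrt u₀) : ℝ) : EReal) := by
  apply le_antisymm
  · have := iInf_le (fun t' : ℝ => ((t' ^ 2 * m - φ t' : ℝ) : EReal)) (Real.sqrt u₀)
    rwa [Real.sq_sqrt hu₀] at this
  · refine le_iInf fun t' => ?_
    rw [EReal.coe_le_coe_iff]
    have ht := tangent φ hconc hu₀ hm (t' ^ 2) (sq_nonneg t')
    rw [phi_sq φ heven] at ht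
    nlinarith

/-- Multiplicative half-quadratic cost `c(t,s) = t²s`.  If the extended function
`Φ(t) = -φ(√t)` for `t ≥ 0`, `Φ(t) = +∞` for `t < 0` is convex (equivalently,
`t ↦ φ(√t)` is concave on `[0,∞)`; lower semicontinuity is automatic), then
`φ^{cc} = φ` (infima taken in the extended reals). -/
theorem stmt_2 (φ : ℝ → ℝ) (hnn : ∀ t, 0 ≤ φ t) (heven : ∀ t, φ (-t) = φ t)
    (hdiff : Differentiable ℝ φ)
    (hconc : ConcaveOn ℝ (Set.Ici 0) (fun t => φ (Real.sqrt t))) :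
    ∀ t : ℝ,
      (⨅ s : ℝ, ((t ^ 2 * s : ℝ) : EReal)
          - ⨅ t' : ℝ, ((t' ^ 2 * s - φ t' : ℝ) : EReal))
        = (φ t : EReal) := by
  intro t
  apply le_antisymm
  · -- iInf ≤ φ t
    by_cases ht : t = 0
    · subst ht
      refine ereal_le_coe_of_forall_eps fun ε hε => ?_
      -- find δ > 0 with φ (√δ) < φ 0 + ε
      have hcont : Tendsto (fun δ : ℝ => φ (Real.sqrt δ)) (nhdsWithin 0 (Set.Ioi 0))
          (nhds (φ 0)) := by
        have : Tendsto (fun δ : ℝ => φ (Real.sqrt δ)) (nhds 0) (nhds (φ (Real.sqrt 0))) :=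
          (hdiff.continuous.comp Real.continuous_sqrt).tendsto 0
        rw [Real.sqrt_zero] at this
        exact this.mono_left nhdsWithin_le_nhds
      obtain ⟨δ, hδlt, hδpos⟩ :=
        ((hcont.eventually (gt_mem_nhds (by linarith : φ 0 < φ 0 + ε))).and
          self_mem_nhdsWithin).exists
      have hδpos' : (0:ℝ) < δ := hδpos
      set m := deriv φ (Real.sqrt δ) * (1 / (2 * Real.sqrt δ)) with hmdef
      have hm := sqrt_hasDerivAt φ hdiff hδpos'
      have hmnn : 0 ≤ m := deriv_nonneg φ hnn hconc hδpos'.le hm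
      refine iInf_le_of_le m ?_
      rw [psi_val φ heven hconc hδpos'.le hm, ← EReal.coe_sub, EReal.coe_le_coe_iff]
      have : (0:ℝ) ^ 2 * m - (δ * m - φ (Real.sqrt δ)) = φ (Real.sqrt δ) - δ * m := by ring
      rw [this]
      nlinarith
    · have hu₀ : (0:ℝ) < t ^ 2 := by positivity
      set m := deriv φ (Real.sqrt (t ^ 2)) * (1 / (2 * Real.sqrt (t ^ 2))) with hmdef
      have hm := sqrt_hasDerivAt φ hdiff hu₀
      refine iInf_le_of_le m ?_
      rw [psi_val φ heven hconc hu₀.le hm, phi_sq φ heven, ← EReal.coe_sub,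
        EReal.coe_le_coe_iff]
      rw [hmdef]
      ring_nf
      exact le_rfl
  · -- φ t ≤ iInf
    refine le_iInf fun s => ?_
    have hψ : (⨅ t' : ℝ, ((t' ^ 2 * s - φ t' : ℝ) : EReal))
        ≤ ((t ^ 2 * s - φ t : ℝ) : EReal) :=
      iInf_le (fun t' : ℝ => ((t' ^ 2 * s - φ t' : ℝ) : EReal)) t
    have := EReal.sub_le_sub (le_refl ((t ^ 2 * s : ℝ) : EReal)) hψ
    rwa [← EReal.coe_sub, show t ^ 2 * s - (t ^ 2 * s - φ t) = φ t by ring] at this
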